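/- Erdős's trichotomy for integers with many divisors. Fix γ ∈ (0,1) and C_1 > 1, and let N be sufficiently large depending on γ and C_1. Let n ≤ N be a positive integer and suppose that τ̃(n) ≥ 2^s τ̃_γ(n) for some real s > 2/γ. Then at least one of the following holds: (i) n ∈ S_1, i.e. n is divisible by some prime power p^a with a ≥ 2 and p^a > (log N)^{C_1}; (ii) n ∈ S_2, i.e. ∏_{p^a ∥ n, p ≤ N^{1/(log log N)^3}} p^a ≥ N^{γ/ log log N}; (iii) there exists an integer i with log₂ s − 2 ≤ i ≤ 6 log log log N such that n has at least γ s (i + 3 − log₂ s)/100 distinct prime divisors in the interval [N^{1/2^{i+1}}, N^{1/2^i}] and n is not divisible by the square of any prime in this interval. -/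

import Mathlib

open MeasureTheory Finset Filter
open scoped Classical BigOperators

noncomputable section

namespace DivisorCorr

/-- Value of the `i`-th affine-linear form (with linear coefficients `A` and
constant terms `b`) at an integer point `n`. -/
def psiZ {d t : ℕ} (A : Fin t → Fin d → ℤ) (b : Fin t → ℤ) (i : Fin t) (n : Fin d → ℤ) : ℤ :=
  ∑ j, A i j * n j + b i

/-- Value of the `i`-th affine-linear form at a real point `x`. -/
def psiR {d t : ℕ} (A : Fin t → Fin d → ℤ) (b : Fin t → ℤ) (i : Fin t) (x : Fin d → ℝ) : ℝ :=
  ∑ j, (A i j : ℝ) * x j + (b i : ℝ)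

/-- Non-degeneracy conditions for a system of affine-linear forms: no form is constant,
no restriction of the system to a single variable is constant, and no two forms are
rational multiples of each other. -/
def IsSystem {d t : ℕ} (A : Fin t → Fin d → ℤ) (b : Fin t → ℤ) : Prop :=
  (∀ i, ∃ j, A i j ≠ 0) ∧ (∀ j, ∃ i, A i j ≠ 0) ∧
    ∀ i j : Fin t, i ≠ j →
      ¬∃ q r : ℤ, q ≠ 0 ∧ r ≠ 0 ∧ (∀ k, q * A i k = r * A j k) ∧ q * b i = r * b j

/-- All linear coefficients are bounded in absolute value by `L`. -/
def CoeffBound {d t : ℕ} (A : Fin t → Fin d → ℤ) (L : ℕ) : Prop :=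
  ∀ i j, |A i j| ≤ (L : ℤ)

/-- Any two distinct linear parts are linearly independent (over ℚ, equivalently over ℤ). -/
def PairwiseIndep {d t : ℕ} (A : Fin t → Fin d → ℤ) : Prop :=
  ∀ i j : Fin t, i ≠ j → ∀ q r : ℤ, (∀ k, q * A i k + r * A j k = 0) → q = 0 ∧ r = 0

/-- Local divisor density `α(d₁,…,d_t)`. -/
def alphaD {d t : ℕ} (A : Fin t → Fin d → ℤ) (b : Fin t → ℤ) (D : Fin t → ℕ) : ℝ :=
  (((Fintype.piFinset fun _ : Fin d => Finset.range ((univ : Finset (Fin t)).lcm D)).filter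
      fun n => ∀ i, (D i : ℤ) ∣ psiZ A b i fun j => (n j : ℤ)).card : ℝ) /
    ((((univ : Finset (Fin t)).lcm D : ℕ) : ℝ)) ^ d

/-- Local factor `β_p`. -/
def betaP {d t : ℕ} (A : Fin t → Fin d → ℤ) (b : Fin t → ℤ) (p : ℕ) : ℝ :=
  (1 - (p : ℝ)⁻¹) ^ t * ∑' a : Fin t → ℕ, alphaD A b fun i => p ^ a i

/-- The divisor function of an integer. -/
def tauZ (n : ℤ) : ℕ := n.natAbs.divisors.card

/-- The normalised divisor function `τ̃(n) = (log N)⁻¹ Σ_{d ∣ n} 1`. -/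
def tauTilde (N : ℕ) (n : ℤ) : ℝ := (Real.log N)⁻¹ * (tauZ n : ℝ)

/-- The truncated normalised divisor function
`τ̃_γ(n) = (γ log N)⁻¹ Σ_{d ∣ n, d ≤ N^γ} 1`. -/
def tauTildeG (N : ℕ) (γ : ℝ) (n : ℤ) : ℝ :=
  (γ * Real.log N)⁻¹ * (((n.natAbs.divisors.filter (fun e : ℕ => (e : ℝ) ≤ (N : ℝ) ^ γ)).card : ℕ) : ℝ)

/-- The integer points of `K` (assumed to lie in `[-N,N]^d`). -/
def pts (d N : ℕ) (K : Set (Fin d → ℝ)) : Finset (Fin d → ℤ) :=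
  (Fintype.piFinset fun _ : Fin d => Finset.Icc (-(N : ℤ)) (N : ℤ)).filter
    fun n => (fun j => (n j : ℝ)) ∈ K

/-- The integer points of `K` (assumed to lie in the box `∏_j [lo j, hi j]`). -/
def ptsBox {d : ℕ} (lo hi : Fin d → ℤ) (K : Set (Fin d → ℝ)) : Finset (Fin d → ℤ) :=
  (Fintype.piFinset fun j : Fin d => Finset.Icc (lo j) (hi j)).filter
    fun n => (fun j => (n j : ℝ)) ∈ K

/-- `K ⊆ [-N,N]^d`. -/
def InBox (d N : ℕ) (K : Set (Fin d → ℝ)) : Prop :=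
  ∀ x ∈ K, ∀ j, x j ∈ Set.Icc (-(N : ℝ)) (N : ℝ)

/-- `Ψ(K) ⊆ [1,N]^t`. -/
def MapsIn {d t : ℕ} (A : Fin t → Fin d → ℤ) (b : Fin t → ℤ) (N : ℕ)
    (K : Set (Fin d → ℝ)) : Prop :=
  ∀ x ∈ K, ∀ i, psiR A b i x ∈ Set.Icc (1 : ℝ) (N : ℝ)

/-- Two linear parts are linearly dependent modulo `p`. -/
def AffRelMod {d : ℕ} (p : ℕ) (u v : Fin d → ℤ) : Prop :=
  ∃ q r : ℤ, (¬(p : ℤ) ∣ q ∨ ¬(p : ℤ) ∣ r) ∧ ∀ k, (p : ℤ) ∣ (q * u k + r * v k)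

/-- `p` is an exceptional prime for the system with linear coefficients `A`. -/
def Exceptional {d t : ℕ} (A : Fin t → Fin d → ℤ) (p : ℕ) : Prop :=
  ∃ i j : Fin t, i ≠ j ∧ AffRelMod p (A i) (A j)

/-- `S₁`: integers divisible by a proper prime power `p^a > (log N)^{C₁}`. -/
def S1set (N : ℕ) (C₁ : ℝ) : Set ℤ :=
  {m | ∃ p a : ℕ, p.Prime ∧ 2 ≤ a ∧ Real.log N ^ C₁ < (p : ℝ) ^ a ∧ (p : ℤ) ^ a ∣ m}

/-- The `X`-smooth part `∏_{p^a ∥ n, p ≤ X} p^a` of `n`. -/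
def smoothPart (n : ℕ) (X : ℝ) : ℕ :=
  ∏ p ∈ (n.primeFactors.filter (fun p : ℕ => (p : ℝ) ≤ X) : Finset ℕ), p ^ n.factorization p

/-- `S₂`: positive "smooth" integers `m` with
`∏_{p^a ∥ m, p ≤ N^{1/(log log N)³}} p^a ≥ N^{γ / log log N}`. -/
def S2set (N : ℕ) (γ : ℝ) : Set ℤ :=
  {m | 0 < m ∧ (N : ℝ) ^ (γ / Real.log (Real.log N)) ≤
      (smoothPart m.natAbs ((N : ℝ) ^ ((Real.log (Real.log N)) ^ 3)⁻¹) : ℝ)}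

/-- `m₀(i,s) = ⌈γ s (i + 3 - log₂ s)/100⌉`. -/
def mSmall (γ : ℝ) (s i : ℕ) : ℕ := ⌈γ * s * ((i : ℝ) + 3 - Real.logb 2 s) / 100⌉₊

/-- Membership in `U(i,s)`: products of `m₀(i,s)` distinct primes from
`[N^{1/2^{i+1}}, N^{1/2^i}]`. -/
def inU (N : ℕ) (γ : ℝ) (s i : ℕ) (u : ℕ) : Prop :=
  Squarefree u ∧ u.primeFactors.card = mSmall γ s i ∧
    ∀ p ∈ u.primeFactors,
      (N : ℝ) ^ (((2 : ℝ) ^ (i + 1))⁻¹) ≤ (p : ℝ) ∧ (p : ℝ) ≤ (N : ℝ) ^ (((2 : ℝ) ^ i)⁻¹)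

/-- `X(i,s)`: positive integers `n ≤ N` divisible by at least `m₀(i,s)` distinct primes
from `[N^{1/2^{i+1}}, N^{1/2^i}]`. -/
def clusterSet (N : ℕ) (γ : ℝ) (s i : ℕ) : Finset ℕ :=
  (Finset.Icc 1 N).filter fun n =>
    mSmall γ s i ≤ (n.primeFactors.filter fun p =>
      (N : ℝ) ^ (((2 : ℝ) ^ (i + 1))⁻¹) ≤ (p : ℝ) ∧ (p : ℝ) ≤ (N : ℝ) ^ (((2 : ℝ) ^ i)⁻¹)).card

/-- The triple sum `Σ_{s=2g+1}^{(log log N)³} Σ_{log₂ s - 2 ≤ i ≤ 6 log log log N}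
Σ_{u ∈ U(i,s)} 2^s 1_{u ∣ n} tg(n)` appearing in the majorants. -/
def nuTail (N : ℕ) (γ : ℝ) (g : ℕ) (tg : ℤ → ℝ) (n : ℤ) : ℝ :=
  ∑ s ∈ Finset.Icc (2 * g + 1) ⌊(Real.log (Real.log N)) ^ 3⌋₊,
    ∑ i ∈ Finset.range (⌊6 * Real.log (Real.log (Real.log N))⌋₊ + 1),
      if Real.logb 2 (s : ℝ) - 2 ≤ (i : ℝ) then
        (2 : ℝ) ^ s * (((n.natAbs.divisors.filter (inU N γ s i)).card : ℕ) : ℝ) * tg n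
      else 0

/-- The majorant `ν₀` for the normalised divisor function, with `γ = 1/g`. -/
def nu0 (N g : ℕ) (C₁ : ℝ) (n : ℤ) : ℝ :=
  (2 : ℝ) ^ (2 * g) * tauTildeG N (g : ℝ)⁻¹ n +
    nuTail N (g : ℝ)⁻¹ g (tauTildeG N (g : ℝ)⁻¹) n +
    if n ∈ S1set N C₁ ∪ S2set N (g : ℝ)⁻¹ then tauTilde N n else 0

/-- `w(N) = (1/2) log log N`. -/
def wN (N : ℕ) : ℝ := Real.log (Real.log N) / 2

/-- Primes `p < w(N)`. -/
def smallPrimes (N : ℕ) : Finset ℕ :=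
  (Finset.range (⌈wN N⌉₊ + 1)).filter fun p : ℕ => p.Prime ∧ (p : ℝ) < wN N

/-- Primes `p ≤ w(N)`. -/
def smallPrimesLe (N : ℕ) : Finset ℕ :=
  (Finset.range (⌈wN N⌉₊ + 1)).filter fun p : ℕ => p.Prime ∧ (p : ℝ) ≤ wN N

/-- `W = ∏_{p < w(N)} p`. -/
def Wp (N : ℕ) : ℕ := ∏ p ∈ smallPrimes N, p

/-- `W̃ = ∏_{p ≤ w(N)} p^{⌊C₁ log_p log N⌋}`. -/
def Wt (N : ℕ) (C₁ : ℝ) : ℕ :=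
  ∏ p ∈ smallPrimesLe N, p ^ ⌊C₁ * (Real.log (Real.log N) / Real.log p)⌋₊

/-- `ϖ(n)`: the `w(N)`-smooth part of `n`. -/
def varpi (N : ℕ) (n : ℕ) : ℕ :=
  ∏ p ∈ (n.primeFactors.filter (fun p : ℕ => (p : ℝ) ≤ wN N) : Finset ℕ), p ^ n.factorization p

/-- The `W`-tricked normalised divisor function
`τ̃'(n) = (W/φ(W)) (log N)⁻¹ Σ_{d ∣ n, (d,W)=1} 1`. -/
def tauW (N : ℕ) (n : ℤ) : ℝ :=
  (Wp N : ℝ) / ((Wp N).totient : ℝ) * (Real.log N)⁻¹ *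
    (((n.natAbs.divisors.filter (fun e => Nat.Coprime e (Wp N))).card : ℕ) : ℝ)

/-- The truncated `W`-tricked normalised divisor function
`τ̃'_γ(n) = (W/φ(W)) (γ log N)⁻¹ Σ_{d ∣ n, d ≤ N^γ, (d,W)=1} 1`. -/
def tauWG (N : ℕ) (γ : ℝ) (n : ℤ) : ℝ :=
  (Wp N : ℝ) / ((Wp N).totient : ℝ) * (γ * Real.log N)⁻¹ *
    (((n.natAbs.divisors.filter (fun e : ℕ =>
        (e : ℝ) ≤ (N : ℝ) ^ γ ∧ Nat.Coprime e (Wp N))).card : ℕ) : ℝ)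

/-- The truncated `W`-tricked majorant `ν₀'`, with `γ = 1/g`. -/
def nu0' (N g : ℕ) (n : ℤ) : ℝ :=
  (2 : ℝ) ^ (2 * g) * tauWG N (g : ℝ)⁻¹ n + nuTail N (g : ℝ)⁻¹ g (tauWG N (g : ℝ)⁻¹) n

/-- **Erdős's trichotomy for integers with many divisors.** If `n ≤ N` and
`τ̃(n) ≥ 2^s τ̃_γ(n)` for some `s > 2/γ`, then `n ∈ S₁`, or `n ∈ S₂`, or `n` has a
cluster of prime factors in a superdyadic interval `[N^{1/2^{i+1}}, N^{1/2^i}]`. -/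

private lemma sum_geom_aux : ∀ K : ℕ, ∑ j ∈ Finset.range K, ((j:ℝ)+3)*((2:ℝ)^j)⁻¹ = 8 - ((K:ℝ)+4)*2*((2:ℝ)^K)⁻¹ := by
  intro K
  induction K with
  | zero => norm_num
  | succ k ih =>
    rw [Finset.sum_range_succ, ih]
    have h2 : ((2:ℝ)^(k+1))⁻¹ = ((2:ℝ)^k)⁻¹ / 2 := by rw [pow_succ]; field_simp
    push_cast
    rw [h2]
    have : ((2:ℝ)^k)⁻¹ ≥ 0 := by positivity
    ring

private lemma sum_geom_le (K : ℕ) : ∑ j ∈ Finset.range K, ((j:ℝ)+3)*((2:ℝ)^j)⁻¹ ≤ 8 := by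
  rw [sum_geom_aux]
  have : (0:ℝ) ≤ ((K:ℝ)+4)*2*((2:ℝ)^K)⁻¹ := by positivity
  linarith

private lemma sum_Icc_geom (i₀ J : ℕ) :
    ∑ i ∈ Finset.Icc i₀ J, (((i:ℝ) - (i₀:ℝ))+3)*((2:ℝ)^i)⁻¹ ≤ 8 * ((2:ℝ)^i₀)⁻¹ := by
  have key : ∑ i ∈ Finset.Icc i₀ J, (((i:ℝ) - (i₀:ℝ))+3)*((2:ℝ)^i)⁻¹
      = ∑ j ∈ Finset.range (J+1-i₀), (((j:ℝ))+3)*((2:ℝ)^j)⁻¹ * ((2:ℝ)^i₀)⁻¹ := by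
    refine Finset.sum_nbij' (fun i => i - i₀) (fun j => i₀ + j) ?_ ?_ ?_ ?_ ?_
    · intro a ha; simp only [Finset.mem_Icc] at ha; simp only [Finset.mem_range]; omega
    · intro b hb; simp only [Finset.mem_range] at hb; simp only [Finset.mem_Icc]; omega
    · intro a ha; simp only [Finset.mem_Icc] at ha; show i₀ + (a - i₀) = a; omega
    · intro b hb; show (i₀ + b) - i₀ = b; omega
    · intro a ha
      simp only [Finset.mem_Icc] at ha
      have h1 : ((a - i₀ : ℕ) : ℝ) = (a:ℝ) - (i₀:ℝ) := by
        push_cast [Nat.cast_sub ha.1]; ring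
      rw [h1]
      have h2 : ((2:ℝ)^(a-i₀))⁻¹ * ((2:ℝ)^i₀)⁻¹ = ((2:ℝ)^a)⁻¹ := by
        rw [← mul_inv, ← pow_add]
        congr 2
        omega
      rw [mul_assoc, h2]
  rw [key, ← Finset.sum_mul]
  have h8 := sum_geom_le (J+1-i₀)
  have : (0:ℝ) ≤ ((2:ℝ)^i₀)⁻¹ := by positivity
  nlinarith

private lemma tau_prod_primes (P : Finset ℕ) (hP : ∀ p ∈ P, p.Prime) :
    (∏ p ∈ P, p).divisors.card = 2 ^ P.card := by
  induction P using Finset.induction_on with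
  | empty => simp
  | @insert a s ha ih =>
    have hap : a.Prime := hP a (Finset.mem_insert_self a s)
    have hsp : ∀ p ∈ s, p.Prime := fun p hp => hP p (Finset.mem_insert_of_mem hp)
    have hcop : a.Coprime (∏ p ∈ s, p) := by
      rw [Nat.Prime.coprime_iff_not_dvd hap]
      intro hdvd
      obtain ⟨q, hq, hqd⟩ := (Prime.dvd_finset_prod_iff hap.prime _).mp hdvd
      exact ha (((Nat.prime_dvd_prime_iff_eq hap (hsp q hq)).mp hqd) ▸ hq)
    rw [Finset.prod_insert ha, Nat.Coprime.card_divisors_mul hcop, Nat.Prime.divisors hap,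
      Finset.card_insert_of_notMem ha]
    have hc : ({1, a} : Finset ℕ).card = 2 := by
      rw [Finset.card_insert_of_notMem (by simp [Ne, eq_comm, hap.ne_one]), Finset.card_singleton]
    rw [ih hsp, hc, pow_succ]
    ring

private lemma sum_powerset_half (A : Finset ℕ) (w : ℕ → ℝ) :
    2 * ∑ S ∈ A.powerset, ∑ p ∈ S, w p = 2 ^ A.card * ∑ p ∈ A, w p := by
  have h1 : ∑ S ∈ A.powerset, ∑ p ∈ A \ S, w p = ∑ S ∈ A.powerset, ∑ p ∈ S, w p := by
    refine Finset.sum_nbij' (fun S => A \ S) (fun S => A \ S) ?_ ?_ ?_ ?_ ?_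
    · intro S hS; exact Finset.mem_powerset.mpr (Finset.sdiff_subset)
    · intro S hS; exact Finset.mem_powerset.mpr (Finset.sdiff_subset)
    · intro S hS; exact Finset.sdiff_sdiff_eq_self (Finset.mem_powerset.mp hS)
    · intro S hS; exact Finset.sdiff_sdiff_eq_self (Finset.mem_powerset.mp hS)
    · intro S hS; rfl
  have h2 : ∀ S ∈ A.powerset, ∑ p ∈ S, w p + ∑ p ∈ A \ S, w p = ∑ p ∈ A, w p := by
    intro S hS
    rw [← Finset.sum_union Finset.disjoint_sdiff,
      Finset.union_sdiff_of_subset (Finset.mem_powerset.mp hS)]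
  have h3 : ∑ S ∈ A.powerset, (∑ p ∈ S, w p + ∑ p ∈ A \ S, w p) = (2:ℝ) ^ A.card * ∑ p ∈ A, w p := by
    rw [Finset.sum_congr rfl h2, Finset.sum_const, Finset.card_powerset]
    simp [nsmul_eq_mul]
  rw [Finset.sum_add_distrib, h1] at h3
  linarith


private lemma eventually_cond (C₁ : ℝ) (hC₁ : 1 < C₁) :
    ∃ N₀ : ℕ, ∀ N : ℕ, N₀ ≤ N →
      2 ≤ Real.log (Real.log N) ∧ (C₁ + 1) * Real.log (Real.log N) ^ 7 ≤ Real.log N := by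
  have hlogN : Tendsto (fun N : ℕ => Real.log (N:ℝ)) atTop atTop :=
    Real.tendsto_log_atTop.comp tendsto_natCast_atTop_atTop
  have h1 : ∀ᶠ N : ℕ in atTop, 2 ≤ Real.log (Real.log N) :=
    (Real.tendsto_log_atTop.comp hlogN).eventually_ge_atTop 2
  have h0 : Tendsto (fun x : ℝ => Real.log x ^ 7 / x) atTop (nhds 0) := by
    have := Real.tendsto_pow_log_div_mul_add_atTop 1 0 7 one_ne_zero
    simpa using this
  have h2' : ∀ᶠ x : ℝ in atTop, Real.log x ^ 7 / x < (C₁ + 1)⁻¹ := by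
    have : (0:ℝ) < (C₁+1)⁻¹ := by positivity
    exact (h0.eventually (eventually_lt_nhds (by simpa using this))).mono (fun x hx => hx)
  have h2'' : ∀ᶠ x : ℝ in atTop, (C₁ + 1) * Real.log x ^ 7 ≤ x := by
    filter_upwards [h2', eventually_gt_atTop (0:ℝ), (Real.tendsto_log_atTop).eventually_ge_atTop 0] with x hx hx0 hlx
    rw [div_lt_iff₀ hx0] at hx
    have hc : (0:ℝ) < C₁ + 1 := by linarith
    have h := mul_lt_mul_of_pos_left hx hc
    rw [← mul_assoc, mul_inv_cancel₀ (ne_of_gt hc), one_mul] at h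
    linarith
  have h2 : ∀ᶠ N : ℕ in atTop, (C₁ + 1) * Real.log (Real.log N) ^ 7 ≤ Real.log N :=
    hlogN.eventually h2''
  obtain ⟨N₀, hN₀⟩ := (h1.and h2).exists_forall_of_atTop
  exact ⟨N₀, fun N hN => hN₀ N hN⟩

set_option maxHeartbeats 4000000 in
theorem erdos_trichotomy (γ : ℝ) (hγ0 : 0 < γ) (hγ1 : γ < 1) (C₁ : ℝ) (hC₁ : 1 < C₁) :
    ∃ N₀ : ℕ, ∀ N : ℕ, N₀ ≤ N → ∀ n : ℕ, 0 < n → n ≤ N →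
      ∀ s : ℝ, 2 / γ < s →
        (2 : ℝ) ^ s * tauTildeG N γ (n : ℤ) ≤ tauTilde N (n : ℤ) →
        (n : ℤ) ∈ S1set N C₁ ∨ (n : ℤ) ∈ S2set N γ ∨
          ∃ i : ℕ, Real.logb 2 s - 2 ≤ (i : ℝ) ∧
            (i : ℝ) ≤ 6 * Real.log (Real.log (Real.log N)) ∧
            γ * s * ((i : ℝ) + 3 - Real.logb 2 s) / 100 ≤
              ((n.primeFactors.filter (fun p : ℕ =>
                  (N : ℝ) ^ (((2 : ℝ) ^ (i + 1))⁻¹) ≤ (p : ℝ) ∧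
                    (p : ℝ) ≤ (N : ℝ) ^ (((2 : ℝ) ^ i)⁻¹))).card : ℝ) ∧
            ∀ p : ℕ, p.Prime → (N : ℝ) ^ (((2 : ℝ) ^ (i + 1))⁻¹) ≤ (p : ℝ) →
              (p : ℝ) ≤ (N : ℝ) ^ (((2 : ℝ) ^ i)⁻¹) → ¬(p ^ 2 ∣ n) := by
  classical
  obtain ⟨N₁, hN₁⟩ := eventually_cond C₁ hC₁
  refine ⟨max N₁ 16, fun N hN n hn0 hnN s hsγ hyp => ?_⟩
  by_contra hcon
  rw [not_or, not_or] at hcon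
  obtain ⟨hS1, hS2, hclus⟩ := hcon
  -- basic notation
  set L : ℝ := Real.log N with hLdef
  set LL : ℝ := Real.log L with hLLdef
  set L3 : ℝ := Real.log LL with hL3def
  obtain ⟨hLL2r, hE2r⟩ := hN₁ N (le_trans (le_max_left _ _) hN)
  have hLL2 : 2 ≤ LL := hLL2r
  have hE2 : (C₁ + 1) * LL ^ 7 ≤ L := hE2r
  clear hLL2r hE2r
  have hN16 : (16:ℕ) ≤ N := le_trans (le_max_right _ _) hN
  have hN1 : (1:ℝ) < (N:ℝ) := by exact_mod_cast lt_of_lt_of_le (by norm_num) hN16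
  have hN0 : (0:ℝ) < (N:ℝ) := by linarith only [hN1]
  have hL0 : 0 < L := Real.log_pos hN1
  have hLL0 : 0 < LL := by linarith only [hLL2]
  have hL30 : 0 < L3 := Real.log_pos (by linarith only [hLL2])
  have hnne : n ≠ 0 := hn0.ne'
  have hs2 : 2 < s := lt_of_le_of_lt (by rw [le_div_iff₀ hγ0]; linarith only [hγ1]) hsγ
  have hs0 : 0 < s := by linarith only [hs2]
  set σ : ℝ := Real.logb 2 s with hσdef
  have hσ1 : 1 < σ := by
    rw [hσdef, Real.lt_logb_iff_rpow_lt (by norm_num) hs0, Real.rpow_one]; exact hs2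
  have hs_eq : (2:ℝ) ^ σ = s := Real.rpow_logb (by norm_num) (by norm_num) hs0
  set X : ℝ := (N:ℝ) ^ ((LL ^ 3)⁻¹) with hXdef
  have hLL3 : (0:ℝ) < LL ^ 3 := by positivity
  have hX1 : 1 < X := Real.one_lt_rpow_iff_of_pos hN0 |>.mpr (Or.inl ⟨hN1, by positivity⟩)
  have hX0 : 0 < X := by linarith only [hX1]
  have hlogX : Real.log X = (LL ^ 3)⁻¹ * L := by
    rw [hXdef, Real.log_rpow hN0]
  -- L^C₁ < N^r criterion
  have hcrit : ∀ r : ℝ, C₁ * LL < r * L → L ^ C₁ < (N:ℝ) ^ r := by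
    intro r hr
    rw [Real.rpow_def_of_pos hL0, Real.rpow_def_of_pos hN0]
    apply Real.exp_lt_exp.mpr
    rw [← hLLdef, ← hLdef]
    nlinarith
  -- S1 helper
  have hS1' : ∀ p : ℕ, p.Prime → L ^ C₁ < (p:ℝ) ^ 2 → ¬ (p ^ 2 ∣ n) := by
    intro p pp hb hd
    exact hS1 ⟨p, 2, pp, le_refl 2, hb, by exact_mod_cast Int.natCast_dvd_natCast.mpr hd⟩
  have hLL7 : C₁ * LL ^ 7 < L := by nlinarith only [hE2, pow_pos hLL0 7]
  have hLLmono : ∀ a b : ℕ, a ≤ b → LL ^ a ≤ LL ^ b := fun a b hab =>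
    pow_le_pow_right₀ (by linarith only [hLL2]) hab
  -- the set P of large prime factors
  set P : Finset ℕ := n.primeFactors.filter (fun p => ¬((p:ℝ) ≤ X)) with hPdef
  have hPfacts : ∀ p ∈ P, p.Prime ∧ p ∣ n ∧ X < (p:ℝ) := by
    intro p hp
    rw [hPdef, Finset.mem_filter, Nat.mem_primeFactors] at hp
    exact ⟨hp.1.1, hp.1.2.1, not_le.mp hp.2⟩
  -- exponents are 1 on P
  have he1 : ∀ p ∈ P, n.factorization p = 1 := by
    intro p hp
    obtain ⟨pp, pdvd, pX⟩ := hPfacts p hp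
    have h1 : 1 ≤ n.factorization p := by
      rw [← Nat.Prime.pow_dvd_iff_le_factorization pp hnne, pow_one]; exact pdvd
    by_contra hne
    have h2 : 2 ≤ n.factorization p := by omega
    have hd : p ^ 2 ∣ n := (Nat.Prime.pow_dvd_iff_le_factorization pp hnne).mpr h2
    have hXsq : L ^ C₁ < X ^ 2 := by
      have : X ^ 2 = (N:ℝ) ^ ((LL ^ 3)⁻¹ * 2) := by
        rw [hXdef, ← Real.rpow_natCast ((N:ℝ) ^ ((LL ^ 3)⁻¹)) 2, ← Real.rpow_mul (le_of_lt hN0)]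
        norm_num
      rw [this]
      apply hcrit
      have hlt : C₁ * LL * LL ^ 3 < 2 * L := by
        have h47 : LL ^ 4 ≤ LL ^ 7 := hLLmono 4 7 (by norm_num)
        have hC₁0 : (0:ℝ) < C₁ := by linarith only [hC₁]
        nlinarith only [h47, hC₁0, hE2, pow_pos hLL0 7, hL0]
      calc C₁ * LL = (C₁ * LL * LL ^ 3) * (LL ^ 3)⁻¹ := by field_simp
        _ < (2 * L) * (LL ^ 3)⁻¹ := mul_lt_mul_of_pos_right hlt (by positivity)
        _ = (LL ^ 3)⁻¹ * 2 * L := by ring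
    have : X ^ 2 < (p:ℝ) ^ 2 := by
      have := pow_lt_pow_left₀ pX (le_of_lt (lt_trans zero_lt_one hX1)) (two_ne_zero)
      exact this
    exact hS1' p pp (by linarith only [hXsq, this]) hd
  -- the smooth part
  set m : ℕ := ∏ p ∈ n.primeFactors.filter (fun p : ℕ => (p:ℝ) ≤ X), p ^ n.factorization p with hmdef
  have hmsmooth : smoothPart n X = m := rfl
  have hnfact : n = ∏ p ∈ n.primeFactors, p ^ n.factorization p := by
    conv_lhs => rw [← Nat.factorization_prod_pow_eq_self hnne]
    rw [Finsupp.prod, Nat.support_factorization]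
  have hmn : m * (∏ p ∈ P, p) = n := by
    rw [hmdef, hPdef]
    conv_rhs => rw [hnfact]
    rw [← Finset.prod_filter_mul_prod_filter_not n.primeFactors (fun p : ℕ => (p:ℝ) ≤ X)]
    congr 1
    apply Finset.prod_congr rfl
    intro p hp
    rw [he1 p (by rw [hPdef]; exact hp), pow_one]
  have hmdvd : m ∣ n := ⟨∏ p ∈ P, p, hmn.symm⟩
  have hm0 : m ≠ 0 := fun h => hnne (by rw [← hmn, h, zero_mul])
  have hpm : ∀ p : ℕ, p.Prime → X < (p:ℝ) → ¬ p ∣ m := by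
    intro p pp pX pdvd
    rw [hmdef] at pdvd
    obtain ⟨q, hq, hqd⟩ := (Prime.dvd_finset_prod_iff pp.prime _).mp pdvd
    rw [Finset.mem_filter] at hq
    have : p = q :=
      (Nat.prime_dvd_prime_iff_eq pp (Nat.prime_of_mem_primeFactors hq.1)).mp
        (pp.dvd_of_dvd_pow hqd)
    rw [this] at pX
    exact absurd hq.2 (not_le.mpr pX)
  have hcop : m.Coprime (∏ p ∈ P, p) := by
    apply Nat.Coprime.prod_right
    intro p hp
    obtain ⟨pp, -, pX⟩ := hPfacts p hp
    exact (Nat.coprime_comm.mp ((Nat.Prime.coprime_iff_not_dvd pp).mpr (hpm p pp pX)))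
  have htau : n.divisors.card = m.divisors.card * 2 ^ P.card := by
    rw [← hmn, Nat.Coprime.card_divisors_mul hcop,
      tau_prod_primes P (fun p hp => (hPfacts p hp).1)]
  have hmS2 : (m:ℝ) < (N:ℝ) ^ (γ / LL) := by
    by_contra hge
    apply hS2
    refine ⟨by exact_mod_cast hn0, ?_⟩
    rw [Int.natAbs_natCast, hmsmooth]
    exact not_lt.mp hge
  -- the index function iP
  set iP : ℕ → ℕ := fun p => ⌊Real.logb 2 (L / Real.log p)⌋₊ with hiPdef
  have hPbase : ∀ p ∈ P, (1:ℝ) < p ∧ 0 < Real.log p ∧ Real.log p ≤ L ∧ 1 ≤ L / Real.log p := by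
    intro p hp
    obtain ⟨pp, pdvd, pX⟩ := hPfacts p hp
    have hp1 : (1:ℝ) < p := by exact_mod_cast pp.one_lt
    have hlogp : 0 < Real.log p := Real.log_pos hp1
    have hpN : (p:ℝ) ≤ N := by
      exact_mod_cast le_trans (Nat.le_of_dvd hn0 pdvd) hnN
    have hlogpL : Real.log p ≤ L := Real.log_le_log (by linarith only [hp1]) hpN
    exact ⟨hp1, hlogp, hlogpL, (one_le_div hlogp).mpr hlogpL⟩
  have hiP_le : ∀ p ∈ P, (p:ℝ) ≤ (N:ℝ) ^ (((2:ℝ) ^ (iP p))⁻¹) := by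
    intro p hp
    obtain ⟨hp1R, hlogp, hlogpL, hq1⟩ := hPbase p hp
    have hfl : (iP p : ℝ) ≤ Real.logb 2 (L / Real.log p) :=
      Nat.floor_le (Real.logb_nonneg (by norm_num) hq1)
    have h2 : (2:ℝ) ^ (iP p : ℝ) ≤ L / Real.log p := by
      calc (2:ℝ) ^ (iP p : ℝ) ≤ (2:ℝ) ^ Real.logb 2 (L / Real.log p) :=
            Real.rpow_le_rpow_of_exponent_le (by norm_num) hfl
        _ = L / Real.log p := Real.rpow_logb (by norm_num) (by norm_num) (div_pos hL0 hlogp)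
    rw [Real.rpow_natCast] at h2
    have h3 : Real.log p ≤ L * ((2:ℝ) ^ (iP p))⁻¹ := by
      rw [le_div_iff₀ hlogp] at h2
      have hpow : (0:ℝ) < (2:ℝ) ^ (iP p) := by positivity
      rw [← div_eq_mul_inv, le_div_iff₀ hpow]
      linarith only [h2]
    calc (p:ℝ) = Real.exp (Real.log p) := (Real.exp_log (by linarith only [hp1R])).symm
      _ ≤ Real.exp (L * ((2:ℝ) ^ (iP p))⁻¹) := Real.exp_le_exp.mpr h3
      _ = (N:ℝ) ^ (((2:ℝ) ^ (iP p))⁻¹) := by rw [Real.rpow_def_of_pos hN0]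
  have hiP_ge : ∀ p ∈ P, (N:ℝ) ^ (((2:ℝ) ^ (iP p + 1))⁻¹) ≤ (p:ℝ) := by
    intro p hp
    obtain ⟨hp1R, hlogp, hlogpL, hq1⟩ := hPbase p hp
    have hfl : Real.logb 2 (L / Real.log p) < (iP p : ℝ) + 1 := Nat.lt_floor_add_one _
    have h2 : L / Real.log p < (2:ℝ) ^ ((iP p : ℝ) + 1) := by
      rw [← Real.rpow_logb (b := 2) (x := L / Real.log p) (by norm_num) (by norm_num) (div_pos hL0 hlogp)]
      exact Real.rpow_lt_rpow_of_exponent_lt (by norm_num) hfl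
    have hcast : ((2:ℝ) ^ ((iP p : ℝ) + 1)) = (2:ℝ) ^ (iP p + 1) := by
      rw [← Real.rpow_natCast (2:ℝ) (iP p + 1)]
      push_cast; ring_nf
    rw [hcast] at h2
    have hpow : (0:ℝ) < (2:ℝ) ^ (iP p + 1) := by positivity
    have h3 : L * ((2:ℝ) ^ (iP p + 1))⁻¹ < Real.log p := by
      rw [div_lt_iff₀ hlogp] at h2
      rw [← div_eq_mul_inv, div_lt_iff₀ hpow]
      linarith only [h2]
    calc (N:ℝ) ^ (((2:ℝ) ^ (iP p + 1))⁻¹) = Real.exp (L * ((2:ℝ) ^ (iP p + 1))⁻¹) := by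
          rw [Real.rpow_def_of_pos hN0]
      _ ≤ Real.exp (Real.log p) := Real.exp_le_exp.mpr (le_of_lt h3)
      _ = (p:ℝ) := Real.exp_log (by linarith only [hp1R])
  have hiP_top : ∀ p ∈ P, (iP p : ℝ) ≤ 6 * L3 := by
    intro p hp
    obtain ⟨hp1R, hlogp, hlogpL, hq1⟩ := hPbase p hp
    obtain ⟨pp, pdvd, pX⟩ := hPfacts p hp
    have hlogpX : (LL ^ 3)⁻¹ * L < Real.log p := by
      rw [← hlogX]
      exact Real.log_lt_log hX0 pX
    have h1 : L / Real.log p < LL ^ 3 := by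
      rw [div_lt_iff₀ hlogp]
      have heq : (LL ^ 3)⁻¹ * L * LL ^ 3 = L := by field_simp
      nlinarith only [hlogpX, hLL3, heq]
    have h2 : Real.logb 2 (L / Real.log p) ≤ Real.logb 2 (LL ^ 3) :=
      Real.logb_le_logb_of_le (by norm_num) (div_pos hL0 hlogp) (le_of_lt h1)
    have h3 : Real.logb 2 (LL ^ 3) = 3 * L3 / Real.log 2 := by
      rw [Real.logb, Real.log_pow]
      push_cast; ring
    have hlog2 : (1:ℝ)/2 < Real.log 2 := by
      have := Real.log_two_gt_d9; linarith only [this]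
    have h4 : 3 * L3 / Real.log 2 ≤ 6 * L3 := by
      rw [div_le_iff₀ (by linarith only [hlog2])]
      nlinarith only [hlog2, hL30]
    calc (iP p : ℝ) ≤ Real.logb 2 (L / Real.log p) :=
          Nat.floor_le (Real.logb_nonneg (by norm_num) hq1)
      _ ≤ Real.logb 2 (LL ^ 3) := h2
      _ = 3 * L3 / Real.log 2 := h3
      _ ≤ 6 * L3 := h4
  -- i₀ and its bounds
  set i₀ : ℕ := ⌈σ - 2⌉₊ with hi₀def
  have hi₀_ge : σ - 2 ≤ (i₀:ℝ) := Nat.le_ceil _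
  have hi₀_le : (i₀:ℝ) ≤ σ := by
    by_cases hσ2 : σ ≤ 2
    · have : i₀ = 0 := Nat.ceil_eq_zero.mpr (by linarith only [hσ2])
      rw [this]; push_cast; linarith only [hσ1]
    · push_neg at hσ2
      have := Nat.ceil_lt_add_one (a := σ - 2) (by linarith only [hσ2])
      rw [← hi₀def] at this
      linarith only [this]
  have hpow_i₀ : s / 4 ≤ (2:ℝ) ^ i₀ := by
    by_cases hσ2 : σ ≤ 2
    · have hs4 : s ≤ 4 := by
        rw [← hs_eq]
        calc (2:ℝ) ^ σ ≤ (2:ℝ) ^ (2:ℝ) := Real.rpow_le_rpow_of_exponent_le (by norm_num) hσ2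
          _ = 4 := by
            rw [show (2:ℝ) = ((2:ℕ):ℝ) by norm_num, Real.rpow_natCast]; norm_num
      have h1p : (1:ℝ) ≤ (2:ℝ) ^ i₀ := one_le_pow₀ (by norm_num)
      linarith only [h1p, hs4]
    · push_neg at hσ2
      have h1 : (2:ℝ) ^ (σ - 2) ≤ (2:ℝ) ^ (i₀:ℝ) :=
        Real.rpow_le_rpow_of_exponent_le (by norm_num) hi₀_ge
      have h2 : (2:ℝ) ^ (σ - 2) = s / 4 := by
        rw [Real.rpow_sub (by norm_num), hs_eq]
        norm_num
      rw [Real.rpow_natCast] at h1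
      linarith only [h1, h2]
  -- cluster-count failure
  have hcount : ∀ i : ℕ, σ - 2 ≤ (i:ℝ) → (i:ℝ) ≤ 6 * L3 →
      ((n.primeFactors.filter (fun p : ℕ =>
        (N:ℝ) ^ (((2:ℝ) ^ (i + 1))⁻¹) ≤ (p:ℝ) ∧ (p:ℝ) ≤ (N:ℝ) ^ (((2:ℝ) ^ i)⁻¹))).card : ℝ)
      < γ * s * ((i:ℝ) + 3 - σ) / 100 := by
    intro i hi1 hi2
    by_contra hge
    push_neg at hge
    apply hclus
    refine ⟨i, hi1, hi2, hge, ?_⟩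
    intro p pp hp1 hp2 hdvd
    -- square condition via S1
    have hpow2 : ((N:ℝ) ^ (((2:ℝ) ^ (i + 1))⁻¹)) ^ 2 = (N:ℝ) ^ (((2:ℝ) ^ i)⁻¹) := by
      rw [← Real.rpow_natCast ((N:ℝ) ^ (((2:ℝ) ^ (i+1))⁻¹)) 2, ← Real.rpow_mul (le_of_lt hN0)]
      congr 1
      rw [pow_succ]
      push_cast
      field_simp
      try ring
    have hbig : L ^ C₁ < (p:ℝ) ^ 2 := by
      have hstep : (N:ℝ) ^ (((2:ℝ) ^ i)⁻¹) ≤ (p:ℝ) ^ 2 := by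
        rw [← hpow2]
        have h0 : (0:ℝ) ≤ (N:ℝ) ^ (((2:ℝ) ^ (i + 1))⁻¹) := by positivity
        exact pow_le_pow_left₀ h0 hp1 2
      have hexp : L ^ C₁ < (N:ℝ) ^ (((2:ℝ) ^ i)⁻¹) := by
        apply hcrit
        have hpow_le : (2:ℝ) ^ i ≤ LL ^ 5 := by
          have e1 : (2:ℝ) ^ (i:ℝ) ≤ (2:ℝ) ^ (6 * L3) :=
            Real.rpow_le_rpow_of_exponent_le (by norm_num) hi2
          have e2 : (2:ℝ) ^ (6 * L3) = Real.exp (6 * L3 * Real.log 2) := by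
            rw [Real.rpow_def_of_pos (by norm_num)]; ring_nf
          have e3 : Real.exp (6 * L3 * Real.log 2) ≤ Real.exp (5 * L3) := by
            apply Real.exp_le_exp.mpr
            have hlog2 : Real.log 2 ≤ 5/6 := by
              have := Real.log_two_lt_d9; linarith only [this]
            nlinarith only [hlog2, hL30]
          have e4 : Real.exp (5 * L3) = LL ^ 5 := by
            rw [show (5:ℝ) * L3 = (5:ℕ) * Real.log LL by push_cast [hL3def]; ring,
              Real.exp_nat_mul, Real.exp_log hLL0]
          rw [← Real.rpow_natCast (2:ℝ) i]
          calc (2:ℝ) ^ (i:ℝ) ≤ (2:ℝ) ^ (6 * L3) := e1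
            _ = Real.exp (6 * L3 * Real.log 2) := e2
            _ ≤ Real.exp (5 * L3) := e3
            _ = LL ^ 5 := e4
        have hLL5 : (0:ℝ) < LL ^ 5 := by positivity
        have h2i : (0:ℝ) < (2:ℝ) ^ i := by positivity
        have hinv : (LL ^ 5)⁻¹ ≤ ((2:ℝ) ^ i)⁻¹ := by
          apply inv_anti₀ h2i hpow_le
        have : C₁ * LL < (LL ^ 5)⁻¹ * L := by
          have hlt : C₁ * LL * LL ^ 5 < L := by
            have h67 : LL ^ 6 ≤ LL ^ 7 := hLLmono 6 7 (by norm_num)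
            have hC₁0 : (0:ℝ) < C₁ := by linarith only [hC₁]
            nlinarith only [h67, hC₁0, hE2, pow_pos hLL0 7]
          calc C₁ * LL = (C₁ * LL * LL ^ 5) * (LL ^ 5)⁻¹ := by field_simp
            _ < L * (LL ^ 5)⁻¹ := mul_lt_mul_of_pos_right hlt (by positivity)
            _ = (LL ^ 5)⁻¹ * L := by ring
        calc C₁ * LL < (LL ^ 5)⁻¹ * L := this
          _ ≤ ((2:ℝ) ^ i)⁻¹ * L := by
              apply mul_le_mul_of_nonneg_right hinv (le_of_lt hL0)
      linarith only [hexp, hstep]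
    exact hS1' p pp hbig hdvd
  -- sets A (medium) and Pl (large)
  set A : Finset ℕ := P.filter (fun p => i₀ ≤ iP p) with hAdef
  set Pl : Finset ℕ := P.filter (fun p => ¬ i₀ ≤ iP p) with hPldef
  have hPcard : A.card + Pl.card = P.card :=
    Finset.card_filter_add_card_filter_not (fun p => i₀ ≤ iP p)
  set w : ℕ → ℝ := fun p => ((2:ℝ) ^ (iP p))⁻¹ with hwdef
  have hw0 : ∀ p, 0 ≤ w p := fun p => by rw [hwdef]; positivity
  -- total weight bound
  have hW : ∑ p ∈ A, w p ≤ 32 * γ / 100 := by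
    have hcomp : ∑ p ∈ A, w p =
        ∑ i ∈ A.image iP, ((A.filter (fun p => iP p = i)).card) • ((2:ℝ) ^ i)⁻¹ :=
      Finset.sum_comp (fun i => ((2:ℝ) ^ i)⁻¹) iP
    rw [hcomp]
    have himg : ∀ i ∈ A.image iP, i₀ ≤ i ∧ (i:ℝ) ≤ 6 * L3 := by
      intro i hi
      obtain ⟨p, hpA, hpi⟩ := Finset.mem_image.mp hi
      have hpP : p ∈ P := Finset.mem_of_mem_filter p hpA
      have : i₀ ≤ iP p := (Finset.mem_filter.mp hpA).2
      exact ⟨hpi ▸ this, hpi ▸ hiP_top p hpP⟩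
    have hki : ∀ i ∈ A.image iP,
        (((A.filter (fun p => iP p = i)).card) : ℝ) < γ * s * ((i:ℝ) + 3 - σ) / 100 := by
      intro i hi
      obtain ⟨hii₀, hi6⟩ := himg i hi
      have hsub : A.filter (fun p => iP p = i) ⊆
          n.primeFactors.filter (fun p : ℕ =>
            (N:ℝ) ^ (((2:ℝ) ^ (i + 1))⁻¹) ≤ (p:ℝ) ∧ (p:ℝ) ≤ (N:ℝ) ^ (((2:ℝ) ^ i)⁻¹)) := by
        intro p hp
        rw [Finset.mem_filter] at hp ⊢
        obtain ⟨hpA, hpi⟩ := hp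
        have hpP : p ∈ P := Finset.mem_of_mem_filter p hpA
        refine ⟨Finset.mem_of_mem_filter p hpP, ?_, ?_⟩
        · rw [← hpi]; exact hiP_ge p hpP
        · rw [← hpi]; exact hiP_le p hpP
      have h1 : ((A.filter (fun p => iP p = i)).card : ℝ) ≤
          ((n.primeFactors.filter (fun p : ℕ =>
            (N:ℝ) ^ (((2:ℝ) ^ (i + 1))⁻¹) ≤ (p:ℝ) ∧ (p:ℝ) ≤ (N:ℝ) ^ (((2:ℝ) ^ i)⁻¹))).card : ℝ) := by
        exact_mod_cast Finset.card_le_card hsub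
      have hiicast : (i₀:ℝ) ≤ (i:ℝ) := by exact_mod_cast hii₀
      have h2 := hcount i (by linarith only [hi₀_ge, hiicast]) hi6
      linarith only [h1, h2]
    -- bound sum over image by sum over Icc
    have hstep1 : ∑ i ∈ A.image iP, ((A.filter (fun p => iP p = i)).card) • ((2:ℝ) ^ i)⁻¹
        ≤ ∑ i ∈ A.image iP, (γ * s / 100) * (((i:ℝ) - (i₀:ℝ)) + 3) * ((2:ℝ) ^ i)⁻¹ := by
      apply Finset.sum_le_sum
      intro i hi
      rw [nsmul_eq_mul]
      have hki' := hki i hi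
      have hii₀ : (i₀:ℝ) ≤ (i:ℝ) := by exact_mod_cast (himg i hi).1
      have hterm : γ * s * ((i:ℝ) + 3 - σ) / 100 ≤ (γ * s / 100) * (((i:ℝ) - (i₀:ℝ)) + 3) := by
        have hd3 : (i:ℝ) + 3 - σ ≤ ((i:ℝ) - (i₀:ℝ)) + 3 := by linarith only [hi₀_le]
        have hγs : 0 ≤ γ * s := by positivity
        nlinarith only [hd3, hγs]
      have hpos : (0:ℝ) ≤ ((2:ℝ) ^ i)⁻¹ := by positivity
      calc (((A.filter (fun p => iP p = i)).card) : ℝ) * ((2:ℝ) ^ i)⁻¹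
          ≤ (γ * s * ((i:ℝ) + 3 - σ) / 100) * ((2:ℝ) ^ i)⁻¹ := by
            apply mul_le_mul_of_nonneg_right (le_of_lt hki') hpos
        _ ≤ (γ * s / 100) * (((i:ℝ) - (i₀:ℝ)) + 3) * ((2:ℝ) ^ i)⁻¹ := by
            apply mul_le_mul_of_nonneg_right hterm hpos
    have hstep2 : ∑ i ∈ A.image iP, (γ * s / 100) * (((i:ℝ) - (i₀:ℝ)) + 3) * ((2:ℝ) ^ i)⁻¹
        ≤ ∑ i ∈ Finset.Icc i₀ ⌊6 * L3⌋₊, (γ * s / 100) * (((i:ℝ) - (i₀:ℝ)) + 3) * ((2:ℝ) ^ i)⁻¹ := by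
      apply Finset.sum_le_sum_of_subset_of_nonneg
      · intro i hi
        obtain ⟨hii₀, hi6⟩ := himg i hi
        rw [Finset.mem_Icc]
        exact ⟨hii₀, Nat.le_floor hi6⟩
      · intro i hi _
        rw [Finset.mem_Icc] at hi
        have hc : (i₀:ℝ) ≤ (i:ℝ) := by exact_mod_cast hi.1
        have hnn : (0:ℝ) ≤ ((i:ℝ) - (i₀:ℝ)) + 3 := by linarith only [hc]
        have hγs : (0:ℝ) ≤ γ * s / 100 := by positivity
        exact mul_nonneg (mul_nonneg hγs hnn) (by positivity)
    have hstep3 : ∑ i ∈ Finset.Icc i₀ ⌊6 * L3⌋₊, (γ * s / 100) * (((i:ℝ) - (i₀:ℝ)) + 3) * ((2:ℝ) ^ i)⁻¹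
        ≤ (γ * s / 100) * (8 * ((2:ℝ) ^ i₀)⁻¹) := by
      have : ∑ i ∈ Finset.Icc i₀ ⌊6 * L3⌋₊, (γ * s / 100) * (((i:ℝ) - (i₀:ℝ)) + 3) * ((2:ℝ) ^ i)⁻¹
          = (γ * s / 100) * ∑ i ∈ Finset.Icc i₀ ⌊6 * L3⌋₊, (((i:ℝ) - (i₀:ℝ)) + 3) * ((2:ℝ) ^ i)⁻¹ := by
        rw [Finset.mul_sum]
        apply Finset.sum_congr rfl
        intro i _; ring
      rw [this]
      have hγs : (0:ℝ) ≤ γ * s / 100 := by positivity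
      exact mul_le_mul_of_nonneg_left (sum_Icc_geom i₀ ⌊6 * L3⌋₊) hγs
    have hfin : (γ * s / 100) * (8 * ((2:ℝ) ^ i₀)⁻¹) ≤ 32 * γ / 100 := by
      have hpow : (0:ℝ) < (2:ℝ) ^ i₀ := by positivity
      have hinv : ((2:ℝ) ^ i₀)⁻¹ ≤ 4 / s := by
        have hs4 : (0:ℝ) < s/4 := by linarith only [hs0]
        calc ((2:ℝ) ^ i₀)⁻¹ ≤ (s/4)⁻¹ := inv_anti₀ hs4 hpow_i₀
          _ = 4/s := by field_simp
      calc (γ * s / 100) * (8 * ((2:ℝ) ^ i₀)⁻¹) ≤ (γ * s / 100) * (8 * (4 / s)) := by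
            apply mul_le_mul_of_nonneg_left _ (by positivity)
            apply mul_le_mul_of_nonneg_left hinv (by norm_num)
        _ = 32 * γ / 100 := by field_simp; ring
    linarith only [hstep1, hstep2, hstep3, hfin]
  -- large part bound
  have hB2 : (2:ℝ) ≤ (2:ℝ) ^ (s/2) := by
    calc (2:ℝ) = (2:ℝ) ^ (1:ℝ) := (Real.rpow_one 2).symm
      _ ≤ (2:ℝ) ^ (s/2) := Real.rpow_le_rpow_of_exponent_le (by norm_num) (by linarith only [hs2])
  have hKl : ((2:ℝ)) ^ Pl.card ≤ (2:ℝ) ^ (s/2) := by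
    rcases Pl.eq_empty_or_nonempty with hemp | ⟨p₀, hp₀⟩
    · rw [hemp]
      simp only [Finset.card_empty, pow_zero]
      linarith only [hB2]
    · have hi₀1 : 1 ≤ i₀ := by
        by_contra h0
        have : i₀ = 0 := by omega
        have := (Finset.mem_filter.mp hp₀).2
        omega
      have hσ2 : 2 < σ := by
        by_contra hle
        push_neg at hle
        have : i₀ = 0 := Nat.ceil_eq_zero.mpr (by linarith only [hle])
        omega
      have hi₀σ : (i₀:ℝ) ≤ σ - 1 := by
        have := Nat.ceil_lt_add_one (a := σ - 2) (by linarith only [hσ2])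
        rw [← hi₀def] at this
        linarith only [this]
      have hpowi₀ : (2:ℝ) ^ i₀ ≤ s / 2 := by
        have h1 : (2:ℝ) ^ (i₀:ℝ) ≤ (2:ℝ) ^ (σ - 1) :=
          Real.rpow_le_rpow_of_exponent_le (by norm_num) hi₀σ
        have h2 : (2:ℝ) ^ (σ - 1) = s / 2 := by
          rw [Real.rpow_sub (by norm_num), hs_eq, Real.rpow_one]
        rw [Real.rpow_natCast] at h1
        linarith only [h1, h2]
      have hplow : ∀ p ∈ Pl, (N:ℝ) ^ (2/s) ≤ (p:ℝ) := by
        intro p hp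
        have hpP : p ∈ P := Finset.mem_of_mem_filter p hp
        have hiPp : iP p < i₀ := by
          have := (Finset.mem_filter.mp hp).2; omega
        have hle : (2:ℝ) ^ (iP p + 1) ≤ (2:ℝ) ^ i₀ :=
          pow_le_pow_right₀ (by norm_num) (by omega)
        have h2i : (0:ℝ) < (2:ℝ) ^ (iP p + 1) := by positivity
        have hexp : 2 / s ≤ ((2:ℝ) ^ (iP p + 1))⁻¹ := by
          have h1 : (2:ℝ) ^ (iP p + 1) ≤ s / 2 := le_trans hle hpowi₀
          have h2 : 0 < s / 2 := by linarith only [hs0]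
          calc 2 / s = (s / 2)⁻¹ := by field_simp
            _ ≤ ((2:ℝ) ^ (iP p + 1))⁻¹ := by
                apply inv_anti₀ h2i h1
        calc (N:ℝ) ^ (2/s) ≤ (N:ℝ) ^ (((2:ℝ) ^ (iP p + 1))⁻¹) :=
              Real.rpow_le_rpow_of_exponent_le (le_of_lt hN1) hexp
          _ ≤ (p:ℝ) := hiP_ge p hpP
      have hprodN : ((∏ p ∈ Pl, p : ℕ) : ℝ) ≤ (N:ℝ) := by
        have hdvd : (∏ p ∈ Pl, p) ∣ n := by
          apply dvd_trans _ (Nat.prod_primeFactors_dvd n)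
          apply Finset.prod_dvd_prod_of_subset
          intro p hp
          exact Finset.mem_of_mem_filter p (Finset.mem_of_mem_filter p hp)
        have := Nat.le_of_dvd hn0 hdvd
        exact_mod_cast le_trans this hnN
      have hprodlow : (N:ℝ) ^ ((2/s) * Pl.card) ≤ ((∏ p ∈ Pl, p : ℕ) : ℝ) := by
        rw [Nat.cast_prod]
        calc (N:ℝ) ^ ((2/s) * Pl.card) = ((N:ℝ) ^ (2/s)) ^ Pl.card := by
              rw [← Real.rpow_natCast ((N:ℝ) ^ (2/s)) Pl.card, ← Real.rpow_mul (le_of_lt hN0)]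
          _ ≤ ∏ p ∈ Pl, (p:ℝ) := by
              rw [← Finset.prod_const]
              apply Finset.prod_le_prod
              · intro p _; positivity
              · intro p hp; exact hplow p hp
      have hexple : (2/s) * Pl.card ≤ 1 := by
        have h1 : (N:ℝ) ^ ((2/s) * Pl.card) ≤ (N:ℝ) ^ (1:ℝ) := by
          rw [Real.rpow_one]
          exact le_trans hprodlow hprodN
        exact (Real.rpow_le_rpow_left_iff hN1).mp h1
      have hcard : (Pl.card : ℝ) ≤ s / 2 := by
        have hs' : 0 < 2 / s := by positivity
        rw [mul_comm, ← le_div_iff₀ hs'] at hexple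
        calc (Pl.card : ℝ) ≤ 1 / (2/s) := hexple
          _ = s / 2 := by field_simp
      calc (2:ℝ) ^ Pl.card = (2:ℝ) ^ ((Pl.card : ℕ) : ℝ) := (Real.rpow_natCast 2 _).symm
        _ ≤ (2:ℝ) ^ (s/2) := Real.rpow_le_rpow_of_exponent_le (by norm_num) hcard
  -- good subsets
  set good : Finset (Finset ℕ) := A.powerset.filter (fun S => ∑ p ∈ S, w p ≤ γ/2) with hgooddef
  set bad : Finset (Finset ℕ) := A.powerset.filter (fun S => ¬ (∑ p ∈ S, w p ≤ γ/2)) with hbaddef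
  have hgb : good.card + bad.card = 2 ^ A.card := by
    rw [hgooddef, hbaddef, Finset.card_filter_add_card_filter_not, Finset.card_powerset]
  have hbadle : (bad.card : ℝ) ≤ (2:ℝ) ^ A.card * (32 / 100) := by
    have h1 : (bad.card : ℝ) * (γ/2) ≤ ∑ S ∈ bad, ∑ p ∈ S, w p := by
      have := Finset.card_nsmul_le_sum bad (fun S => ∑ p ∈ S, w p) (γ/2)
        (fun S hS => le_of_lt (not_le.mp (Finset.mem_filter.mp hS).2))
      rwa [nsmul_eq_mul] at this
    have h2 : ∑ S ∈ bad, ∑ p ∈ S, w p ≤ ∑ S ∈ A.powerset, ∑ p ∈ S, w p := by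
      apply Finset.sum_le_sum_of_subset_of_nonneg (Finset.filter_subset _ _)
      intro S _ _
      exact Finset.sum_nonneg (fun p _ => hw0 p)
    have h3 : 2 * ∑ S ∈ A.powerset, ∑ p ∈ S, w p = 2 ^ A.card * ∑ p ∈ A, w p :=
      sum_powerset_half A w
    have h4 : ∑ S ∈ A.powerset, ∑ p ∈ S, w p ≤ (2:ℝ) ^ A.card * (32 * γ / 100) / 2 := by
      have hpow : (0:ℝ) ≤ (2:ℝ) ^ A.card := by positivity
      linarith only [h3, mul_le_mul_of_nonneg_left hW hpow]
    have hγ2 : (0:ℝ) < γ / 2 := by linarith only [hγ0]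
    have := le_trans h1 (le_trans h2 h4)
    apply le_of_mul_le_mul_right _ hγ2
    calc (bad.card : ℝ) * (γ/2) ≤ (2:ℝ) ^ A.card * (32 * γ / 100) / 2 := this
      _ = (2:ℝ) ^ A.card * (32/100) * (γ/2) := by ring
  have hgoodge : ((68:ℝ) / 100) * (2:ℝ) ^ A.card ≤ (good.card : ℝ) := by
    have hcast : (good.card : ℝ) + (bad.card : ℝ) = (2:ℝ) ^ A.card := by
      exact_mod_cast hgb
    linarith only [hcast, hbadle]
  -- the injection into small divisors
  set T : Finset ℕ := n.divisors.filter (fun e => (e:ℝ) ≤ (N:ℝ) ^ γ) with hTdef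
  have hinj : (m.divisors ×ˢ good).card ≤ T.card := by
    apply Finset.card_le_card_of_injOn (fun x => x.1 * ∏ p ∈ x.2, p)
    · rintro ⟨e, S⟩ hx
      rw [Finset.mem_coe, Finset.mem_product] at hx
      obtain ⟨heS, hSg⟩ := hx
      have heM : e ∣ m := (Nat.mem_divisors.mp heS).1
      have hSA : S ⊆ A := Finset.mem_powerset.mp (Finset.mem_of_mem_filter S hSg)
      have hSw : ∑ p ∈ S, w p ≤ γ/2 := (Finset.mem_filter.mp hSg).2
      have hSP : S ⊆ P := fun p hp => Finset.mem_of_mem_filter p (hSA hp)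
      rw [hTdef, Finset.mem_coe, Finset.mem_filter]
      constructor
      · rw [Nat.mem_divisors]
        refine ⟨?_, hnne⟩
        calc e * ∏ p ∈ S, p ∣ m * ∏ p ∈ P, p :=
              mul_dvd_mul heM (Finset.prod_dvd_prod_of_subset S P _ hSP)
          _ = n := hmn
      · -- size bound
        have hem : (e:ℝ) ≤ (m:ℝ) := by
          exact_mod_cast Nat.le_of_dvd (Nat.pos_of_ne_zero hm0) heM
        have hmb : (m:ℝ) ≤ (N:ℝ) ^ (γ/2) := by
          have h1 : (N:ℝ) ^ (γ / LL) ≤ (N:ℝ) ^ (γ/2) := by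
            apply Real.rpow_le_rpow_of_exponent_le (le_of_lt hN1)
            rw [div_le_div_iff₀ hLL0 (by norm_num)]
            nlinarith only [hγ0, hLL2]
          linarith only [hmS2, h1]
        have hSb : ((∏ p ∈ S, p : ℕ) : ℝ) ≤ (N:ℝ) ^ (γ/2) := by
          rw [Nat.cast_prod]
          have h1 : ∀ p ∈ S, (p:ℝ) ≤ Real.exp (L * w p) := by
            intro p hp
            have := hiP_le p (hSP hp)
            rwa [Real.rpow_def_of_pos hN0] at this
          calc ∏ p ∈ S, (p:ℝ) ≤ ∏ p ∈ S, Real.exp (L * w p) := by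
                apply Finset.prod_le_prod (fun p _ => by positivity) h1
            _ = Real.exp (∑ p ∈ S, L * w p) := (Real.exp_sum S _).symm
            _ = Real.exp (L * ∑ p ∈ S, w p) := by rw [← Finset.mul_sum]
            _ ≤ Real.exp (L * (γ/2)) := by
                apply Real.exp_le_exp.mpr
                apply mul_le_mul_of_nonneg_left hSw (le_of_lt hL0)
            _ = (N:ℝ) ^ (γ/2) := by rw [Real.rpow_def_of_pos hN0]
        have : ((e * ∏ p ∈ S, p : ℕ) : ℝ) ≤ (N:ℝ) ^ (γ/2) * (N:ℝ) ^ (γ/2) := by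
          push_cast
          apply mul_le_mul (le_trans hem hmb) (by rw [← Nat.cast_prod]; exact hSb) (by positivity) (by positivity)
        calc ((e * ∏ p ∈ S, p : ℕ) : ℝ) ≤ (N:ℝ) ^ (γ/2) * (N:ℝ) ^ (γ/2) := this
          _ = (N:ℝ) ^ γ := by rw [← Real.rpow_add hN0]; norm_num
    · -- injectivity
      rintro ⟨e, S⟩ hx ⟨f, S'⟩ hy hxy
      simp only [Finset.coe_product, Set.mem_prod, Finset.mem_coe] at hx hy
      obtain ⟨heS, hSg⟩ := hx
      obtain ⟨hfS, hS'g⟩ := hy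
      have hSA : S ⊆ A := Finset.mem_powerset.mp (Finset.mem_of_mem_filter S hSg)
      have hS'A : S' ⊆ A := Finset.mem_powerset.mp (Finset.mem_of_mem_filter S' hS'g)
      have hSP : S ⊆ P := fun p hp => Finset.mem_of_mem_filter p (hSA hp)
      have hS'P : S' ⊆ P := fun p hp => Finset.mem_of_mem_filter p (hS'A hp)
      simp only at hxy
      have hkey : ∀ (S₁ S₂ : Finset ℕ) (e₁ e₂ : ℕ), S₁ ⊆ P → S₂ ⊆ P →
          e₁ ∣ m → e₂ ∣ m → e₁ * ∏ p ∈ S₁, p = e₂ * ∏ p ∈ S₂, p → S₁ ⊆ S₂ := by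
        intro S₁ S₂ e₁ e₂ h₁ h₂ he₁ he₂ heq q hq
        obtain ⟨qp, -, qX⟩ := hPfacts q (h₁ hq)
        have hqd : q ∣ e₂ * ∏ p ∈ S₂, p := by
          rw [← heq]
          exact Dvd.dvd.mul_left (Finset.dvd_prod_of_mem _ hq) e₁
        rcases (Nat.Prime.dvd_mul qp).mp hqd with hqe | hqprod
        · exact absurd (dvd_trans hqe he₂) (hpm q qp qX)
        · obtain ⟨r, hr, hqr⟩ := (Prime.dvd_finset_prod_iff qp.prime _).mp hqprod
          have : q = r := (Nat.prime_dvd_prime_iff_eq qp (hPfacts r (h₂ hr)).1).mp hqr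
          rwa [this]
      have hSS' : S = S' := Finset.Subset.antisymm
        (hkey S S' e f hSP hS'P (Nat.mem_divisors.mp heS).1 (Nat.mem_divisors.mp hfS).1 hxy)
        (hkey S' S f e hS'P hSP (Nat.mem_divisors.mp hfS).1 (Nat.mem_divisors.mp heS).1 hxy.symm)
      have hef : e = f := by
        rw [hSS'] at hxy
        have hprod0 : 0 < ∏ p ∈ S', p :=
          Finset.prod_pos (fun p hp => (hPfacts p (hS'P hp)).1.pos)
        exact Nat.eq_of_mul_eq_mul_right hprod0 hxy
      rw [Prod.mk.injEq]
      exact ⟨hef, hSS'⟩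
  -- final arithmetic
  have hTd1 : 1 ≤ (m.divisors.card : ℝ) := by
    have : 1 ∈ m.divisors := Nat.one_mem_divisors.mpr hm0
    exact_mod_cast Finset.card_pos.mpr ⟨1, this⟩
  have hTcard : (m.divisors.card : ℝ) * (good.card : ℝ) ≤ (T.card : ℝ) := by
    have := hinj
    rw [Finset.card_product] at this
    exact_mod_cast this
  -- unfold the hypothesis
  have hτ : (tauZ (n:ℤ) : ℝ) = (m.divisors.card : ℝ) * ((2:ℝ) ^ Pl.card * (2:ℝ) ^ A.card) := by
    rw [tauZ, Int.natAbs_natCast, htau]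
    push_cast
    rw [← hPcard, pow_add]
    ring
  have hTG : tauTildeG N γ (n:ℤ) = (γ * L)⁻¹ * (T.card : ℝ) := by
    rw [tauTildeG, Int.natAbs_natCast, hTdef, hLdef]
  have hTT : tauTilde N (n:ℤ) = L⁻¹ * (tauZ (n:ℤ) : ℝ) := by
    rw [tauTilde, hLdef]
  rw [hTG, hTT, hτ] at hyp
  -- now derive contradiction
  set B : ℝ := (2:ℝ) ^ (s/2) with hBdef
  have hBB : (2:ℝ) ^ s = B * B := by
    rw [hBdef, ← Real.rpow_add (by norm_num)]
    norm_num
  have hQ1 : (1:ℝ) ≤ (2:ℝ) ^ A.card := one_le_pow₀ (by norm_num)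
  have hK1 : (1:ℝ) ≤ (2:ℝ) ^ Pl.card := one_le_pow₀ (by norm_num)
  have hmain : (2:ℝ) ^ s * ((γ * L)⁻¹ * (T.card : ℝ)) ≤
      L⁻¹ * ((m.divisors.card : ℝ) * ((2:ℝ) ^ Pl.card * (2:ℝ) ^ A.card)) := hyp
  have hγL : (0:ℝ) < γ * L := by positivity
  have h2s : (2:ℝ) ^ s * (T.card : ℝ) ≤ γ * ((m.divisors.card : ℝ) * ((2:ℝ) ^ Pl.card * (2:ℝ) ^ A.card)) := by
    have := mul_le_mul_of_nonneg_left hmain (le_of_lt hγL)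
    calc (2:ℝ) ^ s * (T.card : ℝ)
        = (γ * L) * ((2:ℝ) ^ s * ((γ * L)⁻¹ * (T.card : ℝ))) := by rw [mul_left_comm, ← mul_assoc (γ * L), mul_inv_cancel₀ hγL.ne', one_mul]
      _ ≤ (γ * L) * (L⁻¹ * ((m.divisors.card : ℝ) * ((2:ℝ) ^ Pl.card * (2:ℝ) ^ A.card))) := this
      _ = γ * ((m.divisors.card : ℝ) * ((2:ℝ) ^ Pl.card * (2:ℝ) ^ A.card)) := by rw [mul_assoc, ← mul_assoc L, mul_inv_cancel₀ hL0.ne', one_mul]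
  -- bound both sides
  have hTlow : (m.divisors.card : ℝ) * ((68:ℝ)/100 * (2:ℝ) ^ A.card) ≤ (T.card : ℝ) := by
    calc (m.divisors.card : ℝ) * ((68:ℝ)/100 * (2:ℝ) ^ A.card)
        ≤ (m.divisors.card : ℝ) * (good.card : ℝ) := by
          apply mul_le_mul_of_nonneg_left hgoodge (by linarith only [hTd1])
      _ ≤ (T.card : ℝ) := hTcard
  have hfinal : False := by
    have hQ0 : (0:ℝ) < (2:ℝ) ^ A.card := by positivity
    have hTd0 : (0:ℝ) < (m.divisors.card : ℝ) := by linarith only [hTd1]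
    have c1 : (2:ℝ) ^ s * ((m.divisors.card : ℝ) * ((68:ℝ)/100 * (2:ℝ) ^ A.card))
        ≤ γ * ((m.divisors.card : ℝ) * ((2:ℝ) ^ Pl.card * (2:ℝ) ^ A.card)) := by
      calc (2:ℝ) ^ s * ((m.divisors.card : ℝ) * ((68:ℝ)/100 * (2:ℝ) ^ A.card))
          ≤ (2:ℝ) ^ s * (T.card : ℝ) := by
            apply mul_le_mul_of_nonneg_left hTlow (by positivity)
        _ ≤ γ * ((m.divisors.card : ℝ) * ((2:ℝ) ^ Pl.card * (2:ℝ) ^ A.card)) := h2s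
    have c2 : γ * ((2:ℝ) ^ Pl.card) ≤ B := by
      calc γ * ((2:ℝ) ^ Pl.card) ≤ 1 * ((2:ℝ) ^ Pl.card) := by
            apply mul_le_mul_of_nonneg_right (le_of_lt hγ1) (by positivity)
        _ = (2:ℝ) ^ Pl.card := one_mul _
        _ ≤ B := hKl
    rw [hBB] at c1
    have hTQ : (0:ℝ) < (m.divisors.card : ℝ) * (2:ℝ) ^ A.card := mul_pos hTd0 hQ0
    have c3 : γ * ((m.divisors.card : ℝ) * ((2:ℝ) ^ Pl.card * (2:ℝ) ^ A.card))
        ≤ B * ((m.divisors.card : ℝ) * (2:ℝ) ^ A.card) := by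
      have h := mul_le_mul_of_nonneg_right c2 (le_of_lt hTQ)
      calc γ * ((m.divisors.card : ℝ) * ((2:ℝ) ^ Pl.card * (2:ℝ) ^ A.card))
          = (γ * (2:ℝ) ^ Pl.card) * ((m.divisors.card : ℝ) * (2:ℝ) ^ A.card) := by ring
        _ ≤ B * ((m.divisors.card : ℝ) * (2:ℝ) ^ A.card) := h
    have c4 : B * B * ((m.divisors.card : ℝ) * ((68:ℝ)/100 * (2:ℝ) ^ A.card))
        ≤ B * ((m.divisors.card : ℝ) * (2:ℝ) ^ A.card) := le_trans c1 c3
    have c5 : (68:ℝ)/100 * (B * B) ≤ B := by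
      apply le_of_mul_le_mul_right _ hTQ
      calc (68:ℝ)/100 * (B * B) * ((m.divisors.card : ℝ) * (2:ℝ) ^ A.card)
          = B * B * ((m.divisors.card : ℝ) * ((68:ℝ)/100 * (2:ℝ) ^ A.card)) := by ring
        _ ≤ B * ((m.divisors.card : ℝ) * (2:ℝ) ^ A.card) := c4
        _ = B * ((m.divisors.card : ℝ) * (2:ℝ) ^ A.card) := rfl
    nlinarith only [c5, hB2]
  exact hfinal


end DivisorCorr
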